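/- Spatial integration-by-parts for Hermite expansions (base case N = 1): let g : ℝ → ℂ be a C¹ function such that g(x)h_ξ(x) → 0 and g'(x)h_ξ(x) → 0 as |x| → ∞ for all relevant indices, and let ξ, η ∈ ℕ. Then 2(ξ − η)·∫_ℝ g(x) h_ξ(x) h_η(x) dx = ∫_ℝ g'(x)·[ h_ξ'(x) h_η(x) − h_ξ(x) h_η'(x) ] dx. -/

import Mathlib

open Real

/-- Physicists' Hermite polynomial. -/
noncomputable def H (k : ℕ) (t : ℝ) : ℝ :=
  (-1 : ℝ) ^ k * Real.exp (t ^ 2) * iteratedDeriv k (fun s : ℝ => Real.exp (-s ^ 2)) t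

/-- Hermite function. -/
noncomputable def h (k : ℕ) (t : ℝ) : ℝ :=
  ((2 : ℝ) ^ k * (Nat.factorial k : ℝ) * Real.sqrt Real.pi) ^ (-(1 : ℝ) / 2)
    * H k t * Real.exp (-t ^ 2 / 2)

open Polynomial

lemma my_derivative_hermite (n : ℕ) :
    derivative (hermite n) = (n : ℤ[X]) * hermite (n - 1) := by
  induction n with
  | zero => simp [hermite_zero]
  | succ n ih =>
    rw [hermite_succ, derivative_sub, derivative_mul, derivative_X, one_mul, ih,
      derivative_mul, Nat.add_sub_cancel]
    simp only [derivative_natCast, zero_mul, zero_add]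
    have h2 := hermite_succ (n - 1)
    cases n with
    | zero => simp [hermite_zero, hermite_one]
    | succ m =>
      simp only [Nat.add_sub_cancel] at *
      have h3 := hermite_succ m
      push_cast
      linear_combination (-(m : ℤ[X]) - 1) * h3

noncomputable def cc (k : ℕ) : ℝ :=
  ((2 : ℝ) ^ k * (Nat.factorial k : ℝ) * Real.sqrt Real.pi) ^ (-(1 : ℝ) / 2)

lemma cc_pos (k : ℕ) : 0 < cc k := by
  apply Real.rpow_pos_of_pos
  positivity

lemma h_eq (k : ℕ) (t : ℝ) : h k t = cc k * H k t * Real.exp (-t ^ 2 / 2) := rfl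

lemma s2 : Real.sqrt 2 * Real.sqrt 2 = 2 := Real.mul_self_sqrt two_pos.le

lemma H_eq (k : ℕ) (t : ℝ) :
    H k t = Real.sqrt 2 ^ k * aeval (Real.sqrt 2 * t) (hermite k) := by
  have hfun : (fun s : ℝ => Real.exp (-s ^ 2))
      = fun s : ℝ => (fun y : ℝ => Real.exp (-(y ^ 2 / 2))) (Real.sqrt 2 * s) := by
    funext s
    simp only [mul_pow, Real.sq_sqrt two_pos.le]
    ring_nf
  have contf : ContDiff ℝ k (fun y : ℝ => Real.exp (-(y ^ 2 / 2))) := by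
    apply Real.contDiff_exp.comp
    exact ((contDiff_id.pow 2).div_const 2).neg
  rw [H, hfun, iteratedDeriv_comp_const_mul contf (Real.sqrt 2), iteratedDeriv_eq_iterate]
  simp only [Polynomial.deriv_gaussian_eq_hermite_mul_gaussian]
  have e1 : Real.exp (-((Real.sqrt 2 * t) ^ 2 / 2)) = Real.exp (-t ^ 2) := by
    congr 1
    rw [mul_pow, Real.sq_sqrt two_pos.le]
    ring
  rw [e1]
  have e2 : Real.exp (t ^ 2) * Real.exp (-t ^ 2) = 1 := by
    rw [← Real.exp_add]; simp
  have e3 : (-1 : ℝ) ^ k * (-1 : ℝ) ^ k = 1 := by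
    rw [← mul_pow]; norm_num
  calc (-1:ℝ) ^ k * Real.exp (t ^ 2)
      * (Real.sqrt 2 ^ k * ((-1) ^ k * (aeval (Real.sqrt 2 * t)) (hermite k) * Real.exp (-t ^ 2)))
      = ((-1:ℝ)^k * (-1)^k) * (Real.exp (t^2) * Real.exp (-t^2))
        * (Real.sqrt 2 ^ k * (aeval (Real.sqrt 2 * t)) (hermite k)) := by ring
    _ = Real.sqrt 2 ^ k * (aeval (Real.sqrt 2 * t)) (hermite k) := by rw [e2, e3]; ring

lemma aeval_derivative_hermite (k : ℕ) (y : ℝ) :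
    aeval y (derivative (hermite k)) = k * aeval y (hermite (k - 1)) := by
  rw [my_derivative_hermite, map_mul, map_natCast]

lemma hasDerivAt_H (k : ℕ) (t : ℝ) :
    HasDerivAt (H k) (2 * k * H (k - 1) t) t := by
  have hfun : H k = fun t => Real.sqrt 2 ^ k * aeval (Real.sqrt 2 * t) (hermite k) :=
    funext (H_eq k)
  rw [hfun]
  have base : HasDerivAt (fun t : ℝ => aeval (Real.sqrt 2 * t) (hermite k))
      (aeval (Real.sqrt 2 * t) (derivative (hermite k)) * (Real.sqrt 2 * 1)) t := by
    exact HasDerivAt.comp t ((hermite k).hasDerivAt_aeval (Real.sqrt 2 * t))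
      ((hasDerivAt_id t).const_mul (Real.sqrt 2))
  have := base.const_mul (Real.sqrt 2 ^ k)
  refine this.congr_deriv (Eq.symm ?_)
  rw [aeval_derivative_hermite]
  cases k with
  | zero => simp
  | succ m =>
    rw [H_eq]
    simp only [Nat.add_sub_cancel, pow_succ]
    push_cast
    linear_combination (-((m:ℝ)+1) * Real.sqrt 2 ^ m * (aeval (Real.sqrt 2 * t)) (hermite m)) * s2

lemma H_rec (k : ℕ) (t : ℝ) :
    H (k + 1) t = 2 * t * H k t - 2 * k * H (k - 1) t := by
  rw [H_eq, H_eq, hermite_succ, map_sub, map_mul, aeval_X, aeval_derivative_hermite]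
  cases k with
  | zero => simp [← mul_assoc, s2]
  | succ m =>
    rw [H_eq]
    simp only [Nat.add_sub_cancel, pow_succ]
    push_cast
    linear_combination (Real.sqrt 2 ^ m * Real.sqrt 2 * t * (aeval (Real.sqrt 2 * t)) (hermite (m+1))
      - ((m:ℝ)+1) * Real.sqrt 2 ^ m * (aeval (Real.sqrt 2 * t)) (hermite m)) * s2

lemma hasDerivAt_h (k : ℕ) (t : ℝ) :
    HasDerivAt (h k) (cc k * (2 * k * H (k - 1) t - t * H k t) * Real.exp (-t ^ 2 / 2)) t := by
  have hfun : h k = fun t => cc k * (H k t * Real.exp (-t ^ 2 / 2)) := by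
    funext t; rw [h_eq]; ring
  rw [hfun]
  have hexp : HasDerivAt (fun t : ℝ => Real.exp (-t ^ 2 / 2)) (-t * Real.exp (-t ^ 2 / 2)) t := by
    have hin : HasDerivAt (fun t : ℝ => -t ^ 2 / 2) (-t) t := by
      have := ((hasDerivAt_pow 2 t).neg.div_const 2)
      refine this.congr_deriv (Eq.symm ?_)
      push_cast; ring
    simpa [mul_comm] using hin.exp
  have := ((hasDerivAt_H k t).mul hexp).const_mul (cc k)
  refine this.congr_deriv (Eq.symm ?_)
  ring

lemma deriv_h (k : ℕ) :
    deriv (h k) = fun t => cc k * (2 * k * H (k - 1) t - t * H k t) * Real.exp (-t ^ 2 / 2) :=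
  funext fun t => (hasDerivAt_h k t).deriv

lemma hasDerivAt_deriv_h (k : ℕ) (t : ℝ) :
    HasDerivAt (deriv (h k)) ((t ^ 2 - (2 * k + 1)) * h k t) t := by
  rw [deriv_h]
  have hfun2 : (fun t : ℝ => cc k * (2 * (k:ℝ) * H (k - 1) t - t * H k t) * Real.exp (-t ^ 2 / 2))
      = fun t : ℝ => cc k * ((2 * (k:ℝ) * H (k - 1) t - t * H k t) * Real.exp (-t ^ 2 / 2)) := by
    funext t; ring
  rw [hfun2]
  have hexp : HasDerivAt (fun t : ℝ => Real.exp (-t ^ 2 / 2)) (-t * Real.exp (-t ^ 2 / 2)) t := by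
    have hin : HasDerivAt (fun t : ℝ => -t ^ 2 / 2) (-t) t := by
      have := ((hasDerivAt_pow 2 t).neg.div_const 2)
      refine this.congr_deriv (Eq.symm ?_)
      push_cast; ring
    simpa [mul_comm] using hin.exp
  have ha := (hasDerivAt_H (k - 1) t).const_mul (2 * (k:ℝ))
  have hb := (hasDerivAt_id t).mul (hasDerivAt_H k t)
  have := ((ha.sub hb).mul hexp).const_mul (cc k)
  refine this.congr_deriv (Eq.symm ?_)
  rw [h_eq]
  simp only [id_eq, Pi.sub_apply, Pi.mul_apply]
  cases k with
  | zero => push_cast; ring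
  | succ m =>
    simp only [Nat.add_sub_cancel]
    have hrec := H_rec m t
    push_cast
    linear_combination (-2 * ((m:ℝ) + 1) * cc (m + 1) * Real.exp (-t ^ 2 / 2)) * hrec

lemma deriv_h_span (k : ℕ) : ∃ a b : ℝ, ∀ t : ℝ,
    deriv (h k) t = a * h (k - 1) t + b * h (k + 1) t := by
  refine ⟨(k : ℝ) * cc k / cc (k - 1), -(cc k / (2 * cc (k + 1))), fun t => ?_⟩
  rw [deriv_h]
  simp only [h_eq]
  have hrec := H_rec k t
  have h1 := (cc_pos (k - 1)).ne'
  have h2 := (cc_pos (k + 1)).ne'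
  field_simp
  linear_combination cc k * hrec

lemma continuous_H (k : ℕ) : Continuous (H k) := by
  have hfun : H k = fun t => Real.sqrt 2 ^ k * aeval (Real.sqrt 2 * t) (hermite k) :=
    funext (H_eq k)
  rw [hfun]
  fun_prop

lemma continuous_h (k : ℕ) : Continuous (h k) := by
  have hfun : h k = fun t => cc k * H k t * Real.exp (-t ^ 2 / 2) := funext (h_eq k)
  rw [hfun]
  have := continuous_H k
  fun_prop

lemma continuous_deriv_h (k : ℕ) : Continuous (deriv (h k)) := by
  rw [deriv_h]
  have := continuous_H k
  have := continuous_H (k - 1)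
  fun_prop

open Filter in
lemma poly_gauss_top (p : ℝ[X]) {b : ℝ} (hb : 0 < b) :
    Tendsto (fun t : ℝ => eval t p * Real.exp (-b * t ^ 2)) atTop (nhds 0) := by
  apply squeeze_zero_norm'
  · filter_upwards [eventually_ge_atTop (max 1 (1 / b))] with t ht
    have ht1 : (1 : ℝ) ≤ t := le_trans (le_max_left _ _) ht
    have htb : 1 / b ≤ t := le_trans (le_max_right _ _) ht
    have hbt : t ≤ b * t ^ 2 := by
      have : 1 ≤ b * t := by
        rw [div_le_iff₀ hb] at htb; nlinarith
      nlinarith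
    have : Real.exp (-b * t ^ 2) ≤ Real.exp (-t) := by
      apply Real.exp_le_exp.mpr; linarith
    calc ‖eval t p * Real.exp (-b * t ^ 2)‖ = |eval t p| * Real.exp (-b * t ^ 2) := by
          rw [norm_mul, Real.norm_eq_abs, Real.norm_eq_abs, abs_of_pos (Real.exp_pos _)]
      _ ≤ |eval t p| * Real.exp (-t) := by
          apply mul_le_mul_of_nonneg_left this (abs_nonneg _)
      _ = |eval t p / Real.exp t| := by
          rw [Real.exp_neg, abs_div, abs_of_pos (Real.exp_pos _)]; ring
  · have := (p.tendsto_div_exp_atTop).abs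
    simpa using this

open Filter in
lemma poly_gauss_cocompact (p : ℝ[X]) {b : ℝ} (hb : 0 < b) :
    Tendsto (fun t : ℝ => eval t p * Real.exp (-b * t ^ 2)) (cocompact ℝ) (nhds 0) := by
  rw [cocompact_eq_atBot_atTop, tendsto_sup]
  constructor
  · have h2 : Tendsto (fun t : ℝ => eval t (p.comp (-X)) * Real.exp (-b * t ^ 2)) atTop (nhds 0) :=
      poly_gauss_top _ hb
    have h3 : Tendsto (fun t : ℝ => eval (-t) p * Real.exp (-b * (-t) ^ 2)) atTop (nhds 0) := by
      refine h2.congr fun t => ?_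
      rw [eval_comp]; simp
    have := h3.comp tendsto_neg_atBot_atTop
    refine this.congr fun t => ?_
    simp
  · exact poly_gauss_top p hb

lemma h_poly_form (k : ℕ) : ∃ p : ℝ[X], ∀ t : ℝ,
    h k t = eval t p * Real.exp (-(1/2) * t ^ 2) := by
  refine ⟨C (cc k * Real.sqrt 2 ^ k) * ((hermite k).map (Int.castRingHom ℝ)).comp (C (Real.sqrt 2) * X),
    fun t => ?_⟩
  rw [h_eq, H_eq]
  rw [eval_mul, eval_C, eval_comp, eval_mul, eval_C, eval_X]
  have : eval (Real.sqrt 2 * t) ((hermite k).map (Int.castRingHom ℝ)) = aeval (Real.sqrt 2 * t) (hermite k) := by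
    rw [aeval_def, eval₂_eq_eval_map]
    norm_cast
  rw [this]
  rw [show -(1/2 : ℝ) * t ^ 2 = -t ^ 2 / 2 by ring]
  ring

open Filter MeasureTheory in
lemma tendsto_h_cocompact (k : ℕ) : Tendsto (h k) (cocompact ℝ) (nhds 0) := by
  obtain ⟨p, hp⟩ := h_poly_form k
  have := poly_gauss_cocompact p (by norm_num : (0:ℝ) < 1/2)
  exact this.congr fun t => (hp t).symm

open Filter in
lemma bound_of_tendsto {E : Type*} [NormedAddCommGroup E] {f : ℝ → E} (hf : Continuous f)
    (h0 : Tendsto f (cocompact ℝ) (nhds 0)) : ∃ C : ℝ, ∀ x, ‖f x‖ ≤ C := by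
  have hmem : f ⁻¹' Metric.ball 0 1 ∈ cocompact ℝ := h0 (Metric.ball_mem_nhds 0 one_pos)
  rw [mem_cocompact] at hmem
  obtain ⟨K, hK, hKs⟩ := hmem
  obtain ⟨C, hC⟩ := hK.exists_bound_of_continuousOn hf.continuousOn
  refine ⟨max C 1, fun x => ?_⟩
  by_cases hx : x ∈ K
  · exact le_trans (hC x hx) (le_max_left _ _)
  · have : f x ∈ Metric.ball (0:E) 1 := hKs hx
    rw [Metric.mem_ball, dist_zero_right] at this
    exact le_trans this.le (le_max_right _ _)

lemma bounded_h (k : ℕ) : ∃ C : ℝ, ∀ x, |h k x| ≤ C := by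
  obtain ⟨C, hC⟩ := bound_of_tendsto (continuous_h k) (tendsto_h_cocompact k)
  exact ⟨C, fun x => by simpa [Real.norm_eq_abs] using hC x⟩

open MeasureTheory in
lemma integrable_h (k : ℕ) : Integrable (h k) := by
  obtain ⟨p, hp⟩ := h_poly_form k
  obtain ⟨C, hC⟩ := bound_of_tendsto
    (f := fun t : ℝ => eval t p * Real.exp (-(1/4) * t ^ 2)) (by fun_prop)
    (poly_gauss_cocompact p (by norm_num))
  have hint : Integrable (fun t : ℝ => C * Real.exp (-(1/4) * t ^ 2)) :=
    (integrable_exp_neg_mul_sq (by norm_num : (0:ℝ) < 1/4)).const_mul C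
  refine hint.mono' (continuous_h k).aestronglyMeasurable (Filter.Eventually.of_forall fun t => ?_)
  rw [Real.norm_eq_abs, hp t]
  have hsplit : Real.exp (-(1/2) * t ^ 2)
      = Real.exp (-(1/4) * t ^ 2) * Real.exp (-(1/4) * t ^ 2) := by
    rw [← Real.exp_add]; ring_nf
  rw [hsplit, abs_mul, abs_mul, ← mul_assoc]
  have hCt : |eval t p| * |Real.exp (-(1/4) * t ^ 2)| ≤ C := by
    have := hC t
    rwa [Real.norm_eq_abs, abs_mul] at this
  calc |eval t p| * |Real.exp (-(1/4) * t ^ 2)| * |Real.exp (-(1/4) * t ^ 2)|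
      ≤ C * |Real.exp (-(1/4) * t ^ 2)| := mul_le_mul_of_nonneg_right hCt (abs_nonneg _)
    _ = C * Real.exp (-(1/4) * t ^ 2) := by rw [abs_of_pos (Real.exp_pos _)]

open Filter MeasureTheory in
lemma integrable_mul_h {F : ℝ → ℂ} (hF : Continuous F)
    (h0 : Tendsto F (cocompact ℝ) (nhds 0)) (m : ℕ) :
    Integrable (fun x => F x * (h m x : ℂ)) := by
  obtain ⟨C, hC⟩ := bound_of_tendsto hF h0
  have hint : Integrable (fun x : ℝ => C * |h m x|) := ((integrable_h m).abs).const_mul C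
  refine hint.mono' (hF.mul (Complex.continuous_ofReal.comp (continuous_h m))).aestronglyMeasurable
    (Filter.Eventually.of_forall fun x => ?_)
  rw [norm_mul, Complex.norm_real, Real.norm_eq_abs]
  exact mul_le_mul_of_nonneg_right (hC x) (abs_nonneg _)

open Filter in
lemma tendsto_mul_h {F : ℝ → ℂ} (h0 : Tendsto F (cocompact ℝ) (nhds 0)) (m : ℕ) :
    Tendsto (fun x => F x * (h m x : ℂ)) (cocompact ℝ) (nhds 0) := by
  obtain ⟨C, hC⟩ := bounded_h m
  have hT : Tendsto (fun x => ‖F x‖ * C) (cocompact ℝ) (nhds 0) := by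
    have := h0.norm.mul_const C
    simpa using this
  apply squeeze_zero_norm _ hT
  intro x
  rw [norm_mul, Complex.norm_real, Real.norm_eq_abs]
  exact mul_le_mul_of_nonneg_left (hC x) (norm_nonneg _)

open MeasureTheory Filter

open MeasureTheory Filter

theorem spatial_integration_by_parts_base (g : ℝ → ℂ) (hg : ContDiff ℝ 1 g)
    (hdecay : ∀ k : ℕ, Tendsto (fun x => g x * (h k x : ℂ)) (cocompact ℝ) (nhds 0))
    (hdecay' : ∀ k : ℕ, Tendsto (fun x => deriv g x * (h k x : ℂ)) (cocompact ℝ) (nhds 0))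
    (ξ η : ℕ) :
    2 * ((ξ : ℂ) - (η : ℂ)) * ∫ x : ℝ, g x * (h ξ x : ℂ) * (h η x : ℂ)
      = ∫ x : ℝ, deriv g x *
          ((Complex.ofReal (deriv (h ξ) x)) * (h η x : ℂ) - (h ξ x : ℂ) * (Complex.ofReal (deriv (h η) x))) := by
  obtain ⟨a₁, b₁, hdξ⟩ := deriv_h_span ξ
  obtain ⟨a₂, b₂, hdη⟩ := deriv_h_span η
  set v : ℝ → ℂ := fun x =>
      Complex.ofReal (deriv (h ξ) x) * (h η x : ℂ) - (h ξ x : ℂ) * Complex.ofReal (deriv (h η) x)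
    with hv_def
  set v' : ℝ → ℂ := fun x => 2 * ((η : ℂ) - ξ) * (h ξ x : ℂ) * (h η x : ℂ) with hv'_def
  have hgc : Continuous g := hg.continuous
  have hg'c : Continuous (deriv g) := hg.continuous_deriv le_rfl
  have hu : ∀ x, HasDerivAt g (deriv g x) x := fun x => (hg.differentiable one_ne_zero x).hasDerivAt
  have hv : ∀ x : ℝ, HasDerivAt v (v' x) x := by
    intro x
    have e1 := (hasDerivAt_h ξ x).differentiableAt.hasDerivAt
    have e2 := (hasDerivAt_h η x).differentiableAt.hasDerivAt
    have d1 := hasDerivAt_deriv_h ξ x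
    have d2 := hasDerivAt_deriv_h η x
    have := (d1.ofReal_comp.mul e2.ofReal_comp).sub (e1.ofReal_comp.mul d2.ofReal_comp)
    refine this.congr_deriv (Eq.symm ?_)
    rw [hv'_def]
    push_cast
    ring
  have hI1 : Integrable (fun x => (g x * (h ξ x : ℂ)) * (h η x : ℂ)) :=
    integrable_mul_h (hgc.mul (Complex.continuous_ofReal.comp (continuous_h ξ))) (hdecay ξ) η
  have hIg' : ∀ k m : ℕ, Integrable (fun x => (deriv g x * (h k x : ℂ)) * (h m x : ℂ)) :=
    fun k m => integrable_mul_h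
      (hg'c.mul (Complex.continuous_ofReal.comp (continuous_h k))) (hdecay' k) m
  have huv' : Integrable (g * v') := by
    have := hI1.const_mul (2 * ((η : ℂ) - ξ))
    refine this.congr (Filter.Eventually.of_forall fun x => ?_)
    simp only [Pi.mul_apply, hv'_def]
    ring
  have hu'v : Integrable (deriv g * v) := by
    have base := ((((hIg' (ξ-1) η).const_mul (a₁:ℂ)).add ((hIg' (ξ+1) η).const_mul (b₁:ℂ))).sub
      (((hIg' ξ (η-1)).const_mul (a₂:ℂ)).add ((hIg' ξ (η+1)).const_mul (b₂:ℂ))))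
    refine base.congr (Filter.Eventually.of_forall fun x => ?_)
    simp only [Pi.mul_apply, Pi.add_apply, Pi.sub_apply, hv_def]
    rw [hdξ x, hdη x]
    push_cast
    ring
  have hbnd : Tendsto (g * v) (cocompact ℝ) (nhds 0) := by
    have T := ((((tendsto_mul_h (hdecay (ξ-1)) η).const_mul (a₁:ℂ)).add
        ((tendsto_mul_h (hdecay (ξ+1)) η).const_mul (b₁:ℂ))).sub
      (((tendsto_mul_h (hdecay ξ) (η-1)).const_mul (a₂:ℂ)).add
        ((tendsto_mul_h (hdecay ξ) (η+1)).const_mul (b₂:ℂ))))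
    simp only [mul_zero, add_zero, sub_zero, sub_self] at T
    refine T.congr fun x => ?_
    simp only [Pi.mul_apply, hv_def]
    rw [hdξ x, hdη x]
    push_cast
    ring
  rw [cocompact_eq_atBot_atTop, tendsto_sup] at hbnd
  have key := MeasureTheory.integral_mul_deriv_eq_deriv_mul (fun x _ => hu x) (fun x _ => hv x) huv' hu'v hbnd.1 hbnd.2
  have e : (∫ x : ℝ, g x * v' x) = 2 * ((η : ℂ) - ξ) * ∫ x : ℝ, g x * (h ξ x : ℂ) * (h η x : ℂ) := by
    rw [← MeasureTheory.integral_const_mul]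
    apply MeasureTheory.integral_congr_ae (Filter.Eventually.of_forall fun x => ?_)
    simp only [hv'_def]
    ring
  rw [e] at key
  show 2 * ((ξ : ℂ) - (η : ℂ)) * ∫ x : ℝ, g x * (h ξ x : ℂ) * (h η x : ℂ) = ∫ x : ℝ, deriv g x * v x
  linear_combination -key
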